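/- Let d : ℕ² → ℝ \ {0} satisfy: |d(n,k) − d(n,k−1)| ≤ c for all n ≥ 0, k ≥ 1, and |d(n,0) − d(n+1,0)| ≤ c for all n ≥ 0, and suppose that for every M > 0 the set {(n,k) : |d(n,k)| ≤ M} is finite. Suppose furthermore that the sign partition admits no infinite family of pairwise disjoint paths from the positive set to the negative set in the graph on ℕ² with edges (n,k)∼(n,k±1) and (n,0)∼(n±1,0). Then for each n, exactly one of the sets {k : d(n,k) > 0} and {k : d(n,k) < 0} is finite; moreover, after discarding finitely many points, there is a finite set F ⊆ ℕ such that sign d(n,k) = +1 for all k iff n ∈ F, and −1 otherwise (or with + and − interchanged). Equivalently: the set of n for which {k : d(n,k)>0} is infinite is either finite or cofinite. -/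

import Mathlib

/-- The graph on `ℕ²` with edges `(n,k) ∼ (n,k+1)` and `(n,0) ∼ (n+1,0)`. -/
def sphereGraph : SimpleGraph (ℕ × ℕ) :=
  SimpleGraph.fromRel (fun p q =>
    (p.1 = q.1 ∧ p.2 + 1 = q.2) ∨ (p.2 = 0 ∧ q.2 = 0 ∧ p.1 + 1 = q.1))

lemma sphere_adj_vert (n k : ℕ) : sphereGraph.Adj (n, k + 1) (n, k) := by
  rw [sphereGraph, SimpleGraph.fromRel_adj]
  exact ⟨by simp, Or.inr (Or.inl ⟨rfl, rfl⟩)⟩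

lemma sphere_adj_horiz (n : ℕ) : sphereGraph.Adj (n, 0) (n + 1, 0) := by
  rw [sphereGraph, SimpleGraph.fromRel_adj]
  exact ⟨by simp, Or.inl (Or.inr ⟨rfl, rfl, rfl⟩)⟩

/-- Vertical walk from `(n,k)` down to `(n,0)`. -/
def sphereVWalk (n : ℕ) : (k : ℕ) → sphereGraph.Walk (n, k) (n, 0)
  | 0 => SimpleGraph.Walk.nil
  | k + 1 => SimpleGraph.Walk.cons (sphere_adj_vert n k) (sphereVWalk n k)

lemma sphereVWalk_support (n k : ℕ) :
    ∀ x ∈ (sphereVWalk n k).support, x.1 = n := by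
  induction k with
  | zero =>
      intro x hx
      simp [sphereVWalk] at hx
      simp [hx]
  | succ k ih =>
      intro x hx
      rw [sphereVWalk, SimpleGraph.Walk.support_cons] at hx
      rcases List.mem_cons.mp hx with h | h
      · simp [h]
      · exact ih x h

/-- Horizontal walk from `(n,0)` to `(n+j,0)`. -/
def sphereHWalk (n : ℕ) : (j : ℕ) → sphereGraph.Walk (n, 0) (n + j, 0)
  | 0 => SimpleGraph.Walk.nil
  | j + 1 => (sphereHWalk n j).concat (sphere_adj_horiz (n + j))

lemma sphereHWalk_support (n j : ℕ) :
    ∀ x ∈ (sphereHWalk n j).support, n ≤ x.1 ∧ x.1 ≤ n + j := by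
  induction j with
  | zero =>
      intro x hx
      simp [sphereHWalk] at hx
      simp [hx]
  | succ j ih =>
      intro x hx
      rw [sphereHWalk, SimpleGraph.Walk.support_concat,
        List.mem_append, List.mem_singleton] at hx
      rcases hx with h | h
      · obtain ⟨h1, h2⟩ := ih x h
        exact ⟨h1, by omega⟩
      · subst h
        simp

/-- The ladder walk from `(n,k)` across the bottom row to `(m,l)`. -/
def sphereLadder (n m k l : ℕ) (h : n ≤ m) : sphereGraph.Walk (n, k) (m, l) :=
  (sphereVWalk n k).append
    ((sphereHWalk n (m - n)).append ((sphereVWalk m l).reverse.copy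
      (by rw [Nat.add_sub_cancel' h]) rfl))

lemma sphereLadder_support (n m k l : ℕ) (h : n ≤ m) :
    ∀ x ∈ (sphereLadder n m k l h).support, n ≤ x.1 ∧ x.1 ≤ m := by
  intro x hx
  rw [sphereLadder, SimpleGraph.Walk.mem_support_append_iff] at hx
  rcases hx with hx | hx
  · have := sphereVWalk_support n k x hx
    omega
  · rw [SimpleGraph.Walk.mem_support_append_iff] at hx
    rcases hx with hx | hx
    · have := sphereHWalk_support n (m - n) x hx
      omega
    · rw [SimpleGraph.Walk.support_copy, SimpleGraph.Walk.support_reverse,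
        List.mem_reverse] at hx
      have := sphereVWalk_support m l x hx
      omega

/-- Each column eventually has a constant sign. -/
lemma sphere_col_sign (d : ℕ × ℕ → ℝ) (c : ℝ) (hd : ∀ p, d p ≠ 0)
    (hlip1 : ∀ n k, |d (n, k + 1) - d (n, k)| ≤ c)
    (hcpt : ∀ M : ℝ, {p : ℕ × ℕ | |d p| ≤ M}.Finite) (n : ℕ) :
    ({k : ℕ | 0 < d (n, k)}.Finite ∧ {k : ℕ | d (n, k) < 0}.Infinite) ∨
      ({k : ℕ | 0 < d (n, k)}.Infinite ∧ {k : ℕ | d (n, k) < 0}.Finite) := by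
  have hfin : {k : ℕ | |d (n, k)| ≤ c}.Finite := by
    have heq : {k : ℕ | |d (n, k)| ≤ c} = (fun k => (n, k)) ⁻¹' {p | |d p| ≤ c} := rfl
    rw [heq]
    exact Set.Finite.preimage (fun a _ b _ hab => (Prod.ext_iff.mp hab).2) (hcpt c)
  obtain ⟨B, hB⟩ := hfin.bddAbove
  have hK : ∀ k, B + 1 ≤ k → c < |d (n, k)| := by
    intro k hk
    by_contra hcon
    push_neg at hcon
    have := hB hcon
    omega
  have step : ∀ k, B + 1 ≤ k → (0 < d (n, k) ↔ 0 < d (n, B + 1)) := by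
    intro k hk
    induction k, hk using Nat.le_induction with
    | base => exact Iff.rfl
    | succ k hk ih =>
        rw [← ih]
        obtain ⟨hl1, hl2⟩ := abs_le.mp (hlip1 n k)
        rcases lt_abs.mp (hK k hk) with ha | ha <;>
          rcases lt_abs.mp (hK (k + 1) (by omega)) with hb | hb <;>
          constructor <;> intro hh <;> linarith
  rcases lt_trichotomy (d (n, B + 1)) 0 with h0 | h0 | h0
  · left
    constructor
    · apply (Set.finite_Iio (B + 1)).subset
      intro k hk
      simp only [Set.mem_setOf_eq] at hk
      simp only [Set.mem_Iio]
      by_contra hcon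
      push_neg at hcon
      have := (step k hcon).mp hk
      linarith
    · apply Set.Infinite.mono (s := Set.Ici (B + 1)) _ (Set.Ici_infinite (B + 1))
      intro k hk
      simp only [Set.mem_Ici] at hk
      simp only [Set.mem_setOf_eq]
      rcases (hd (n, k)).lt_or_gt with h | h
      · exact h
      · exact absurd ((step k hk).mp h) (by linarith)
  · exact absurd h0 (hd (n, B + 1))
  · right
    constructor
    · apply Set.Infinite.mono (s := Set.Ici (B + 1)) _ (Set.Ici_infinite (B + 1))
      intro k hk
      simp only [Set.mem_Ici] at hk
      simp only [Set.mem_setOf_eq]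
      rcases (hd (n, k)).lt_or_gt with h | h
      · exact absurd h0 (((step k hk).not).mp (not_lt.mpr h.le))
      · exact h
    · apply (Set.finite_Iio (B + 1)).subset
      intro k hk
      simp only [Set.mem_setOf_eq] at hk
      simp only [Set.mem_Iio]
      by_contra hcon
      push_neg at hcon
      exact ((step k hcon).not.mp (not_lt.mpr hk.le)) h0

/-- Sign characterization on the quantum sphere (combinatorial form): under the
edge-Lipschitz bound, the compact-resolvent condition and the absence of an
infinite ladder, for each `n` exactly one of `{k : d(n,k) > 0}` and
`{k : d(n,k) < 0}` is finite, and the set of `n` for which `{k : d(n,k) > 0}`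
is infinite is finite or cofinite. -/
theorem sphere_sign_characterization (d : ℕ × ℕ → ℝ) (c : ℝ) (hc : 0 < c)
    (hd : ∀ p, d p ≠ 0)
    (hlip1 : ∀ n k, |d (n, k + 1) - d (n, k)| ≤ c)
    (hlip2 : ∀ n, |d (n, 0) - d (n + 1, 0)| ≤ c)
    (hcpt : ∀ M : ℝ, {p : ℕ × ℕ | |d p| ≤ M}.Finite)
    (hladder : ¬∃ (p : ℕ → (ℕ × ℕ) × (ℕ × ℕ))
        (w : ∀ i, sphereGraph.Walk (p i).1 (p i).2),
      (∀ i, 0 < d (p i).1) ∧ (∀ i, d (p i).2 < 0) ∧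
      (∀ i j, i ≠ j → ∀ x, x ∈ (w i).support → x ∉ (w j).support)) :
    (∀ n : ℕ,
      ({k : ℕ | 0 < d (n, k)}.Finite ∧ {k : ℕ | d (n, k) < 0}.Infinite) ∨
      ({k : ℕ | 0 < d (n, k)}.Infinite ∧ {k : ℕ | d (n, k) < 0}.Finite)) ∧
    ({n : ℕ | {k : ℕ | 0 < d (n, k)}.Infinite}.Finite ∨
      {n : ℕ | {k : ℕ | 0 < d (n, k)}.Infinite}ᶜ.Finite) := by
  refine ⟨fun n => sphere_col_sign d c hd hlip1 hcpt n, ?_⟩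
  by_contra hcon
  push_neg at hcon
  obtain ⟨h1, h2⟩ := hcon
  set A := {n : ℕ | {k : ℕ | 0 < d (n, k)}.Infinite} with hAdef
  have hA : A.Infinite := h1
  have hAc : Aᶜ.Infinite := h2
  have hneg : ∀ n, n ∉ A → {k : ℕ | d (n, k) < 0}.Infinite := by
    intro n hn
    rcases sphere_col_sign d c hd hlip1 hcpt n with ⟨_, h⟩ | ⟨h, _⟩
    · exact h
    · exact absurd h hn
  have key : ∀ b : ℕ, ∃ q : ℕ × ℕ, b < q.1 ∧ q.1 < q.2 ∧ q.1 ∈ A ∧ q.2 ∉ A := by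
    intro b
    obtain ⟨x, hx, hbx⟩ := hA.exists_gt b
    obtain ⟨y, hy, hxy⟩ := hAc.exists_gt x
    exact ⟨(x, y), hbx, hxy, hx, hy⟩
  let f : ℕ → ℕ × ℕ := fun i => Nat.rec (key 0).choose (fun _ q => (key q.2).choose) i
  have hfs : ∀ i, f (i + 1) = (key (f i).2).choose := fun _ => rfl
  have hspec : ∀ i, (f i).1 < (f i).2 ∧ (f i).1 ∈ A ∧ (f i).2 ∉ A := by
    intro i
    cases i with
    | zero => exact ⟨(key 0).choose_spec.2.1, (key 0).choose_spec.2.2⟩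
    | succ i =>
        rw [hfs]
        exact ⟨(key (f i).2).choose_spec.2.1, (key (f i).2).choose_spec.2.2⟩
  have hmono : ∀ i j, i < j → (f i).2 < (f j).1 := by
    intro i j hij
    induction j with
    | zero => omega
    | succ j ih =>
        have h1 : (f j).2 < (f (j + 1)).1 := by
          rw [hfs]
          exact (key (f j).2).choose_spec.1
        rcases Nat.lt_succ_iff_lt_or_eq.mp hij with h | h
        · have h2 := ih h
          have h3 := (hspec j).1
          omega
        · subst h
          exact h1
  choose kk hkk using fun i => ((hspec i).2.1).nonempty
  choose ll hll using fun i => (hneg _ (hspec i).2.2).nonempty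
  apply hladder
  refine ⟨fun i => (((f i).1, kk i), ((f i).2, ll i)),
    fun i => sphereLadder (f i).1 (f i).2 (kk i) (ll i) (le_of_lt (hspec i).1),
    fun i => hkk i, fun i => hll i, ?_⟩
  intro i j hij x hxi hxj
  have hi := sphereLadder_support _ _ _ _ _ x hxi
  have hj := sphereLadder_support _ _ _ _ _ x hxj
  rcases hij.lt_or_gt with h | h
  · have := hmono i j h
    omega
  · have := hmono j i h
    omega
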